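/- arXiv:1810.10735 — 2 statements merged into one kernel-verified Lean document; each statement's English description precedes it below -/
import Mathlib

section
/- Let Phi be the map on the closed quarter disk {(r cos(phi), r sin(phi)) : 0 <= r <= 1, 0 <= phi <= pi/2} defined in polar coordinates by Phi(r,phi) = (r, 2 phi) (doubling the angle), mapping onto the closed half disk. Then Phi is a bijective Lipschitz map with Lipschitz inverse, but for every 0 < h <= 1 the affine interpolant of Phi on the triangle T = conv{(0,0),(h,0),(0,h)} (the affine map agreeing with Phi at the three vertices) maps T into the line segment [-h,h] x {0}, hence is not injective on T. -/
open Complex Set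

/-- The angle-doubling map on the closed quarter disk, written in complex
coordinates: `Φ` maps the point with polar coordinates `(r, φ)` to the point
with polar coordinates `(r, 2φ)`. -/
noncomputable def Phi : ℂ → ℂ := fun z => if z = 0 then 0 else z ^ 2 / (‖z‖ : ℂ)

/-- The closed quarter disk `{(r cos φ, r sin φ) : 0 ≤ r ≤ 1, 0 ≤ φ ≤ π/2}`. -/
noncomputable def quarterDisk : Set ℂ :=
  {z : ℂ | ‖z‖ ≤ 1 ∧ 0 ≤ z.re ∧ 0 ≤ z.im}

/-- The closed half disk `{(r cos φ, r sin φ) : 0 ≤ r ≤ 1, 0 ≤ φ ≤ π}`. -/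
noncomputable def halfDisk : Set ℂ :=
  {z : ℂ | ‖z‖ ≤ 1 ∧ 0 ≤ z.im}

lemma Phi_zero : Phi 0 = 0 := by simp [Phi]

lemma Phi_ne (z : ℂ) (hz : z ≠ 0) : Phi z = z ^ 2 / (‖z‖ : ℂ) := by simp [Phi, hz]

lemma abs_Phi (z : ℂ) : ‖Phi z‖ = ‖z‖ := by
  rcases eq_or_ne z 0 with h | h
  · simp [h, Phi_zero]
  · rw [Phi_ne z h]
    have h0 : ‖z‖ ≠ 0 := by simpa using h
    rw [norm_div, norm_pow]
    simp [pow_two]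

lemma Phi_real (h : ℝ) (hh : 0 ≤ h) : Phi (h : ℂ) = (h : ℂ) := by
  rcases eq_or_lt_of_le hh with h0 | h0
  · simp [← h0, Phi_zero]
  · have : (h : ℂ) ≠ 0 := by exact_mod_cast h0.ne'
    rw [Phi_ne _ this]
    rw [Complex.norm_real, Real.norm_eq_abs, abs_of_pos h0]
    field_simp

lemma Phi_I (h : ℝ) (h0 : 0 < h) : Phi (h * Complex.I) = -(h : ℂ) := by
  have hne : (h : ℂ) * Complex.I ≠ 0 := by
    simp [Complex.ext_iff, h0.ne']
  rw [Phi_ne _ hne]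
  have : ‖(h:ℂ) * Complex.I‖ = h := by
    simp [abs_of_pos h0]
  rw [this]
  have hc : (h : ℂ) ≠ 0 := by exact_mod_cast h0.ne'
  rw [mul_pow, Complex.I_sq]
  field_simp

lemma maps_to : Set.MapsTo Phi quarterDisk halfDisk := by
  intro z hz
  obtain ⟨h1, h2, h3⟩ := hz
  constructor
  · rw [abs_Phi]; exact h1
  · rcases eq_or_ne z 0 with h | h
    · simp [h, Phi_zero]
    · rw [Phi_ne z h]
      have h0 : (0:ℝ) < ‖z‖ := norm_pos_iff.mpr h
      have : (Phi z).im = (z^2).im / ‖z‖ := by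
        rw [Phi_ne z h, Complex.div_ofReal_im]
      rw [Complex.div_ofReal_im]
      apply div_nonneg _ h0.le
      rw [pow_two, Complex.mul_im]
      nlinarith

lemma inj_on : Set.InjOn Phi quarterDisk := by
  intro z hz w hw hzw
  have habs : ‖z‖ = ‖w‖ := by
    rw [← abs_Phi z, ← abs_Phi w, hzw]
  rcases eq_or_ne z 0 with h | h
  · have : ‖w‖ = 0 := by rw [← habs, h]; simp
    rw [h, norm_eq_zero.mp this]
  · have h' : w ≠ 0 := by
      intro hc
      rw [hc] at habs; simp at habs
      exact h habs
    rw [Phi_ne z h, Phi_ne w h', habs] at hzw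
    have hw0 : (‖w‖ : ℂ) ≠ 0 := by simpa using h'
    have hsq : z ^ 2 = w ^ 2 := by
      field_simp at hzw; exact hzw
    have : z = w ∨ z = -w := sq_eq_sq_iff_eq_or_eq_neg.mp hsq
    rcases this with h1 | h1
    · exact h1
    · exfalso
      obtain ⟨_, hzr, hzi⟩ := hz
      obtain ⟨_, hwr, hwi⟩ := hw
      apply h
      rw [Complex.ext_iff] at h1 ⊢
      simp at h1 ⊢
      constructor <;> nlinarith [h1.1, h1.2]

lemma surj_on : Set.SurjOn Phi quarterDisk halfDisk := by
  intro w hw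
  obtain ⟨h1, h2⟩ := hw
  rcases eq_or_ne w 0 with h | h
  · exact ⟨0, by simp [quarterDisk], by simp [h, Phi_zero]⟩
  · set r : ℝ := ‖w‖ with hr
    have hr0 : 0 < r := norm_pos_iff.mpr h
    have hxr : |w.re| ≤ r := Complex.abs_re_le_norm w
    have hxr1 : -r ≤ w.re := neg_le_of_abs_le hxr
    have hxr2 : w.re ≤ r := le_of_abs_le hxr
    set a : ℝ := Real.sqrt (r * (r + w.re) / 2) with ha
    set b : ℝ := Real.sqrt (r * (r - w.re) / 2) with hb
    set z : ℂ := ⟨a, b⟩ with hz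
    have ha2 : a ^ 2 = r * (r + w.re) / 2 := Real.sq_sqrt (by nlinarith)
    have hb2 : b ^ 2 = r * (r - w.re) / 2 := Real.sq_sqrt (by nlinarith)
    have hr2 : r ^ 2 = w.re ^ 2 + w.im ^ 2 := by
      rw [hr, Complex.sq_norm, Complex.normSq_apply]; ring
    have hab : 2 * (a * b) = 2 * Real.sqrt (r^2 * (r^2 - w.re^2) / 4) := by
      rw [ha, hb, ← Real.sqrt_mul (by nlinarith)]
      ring_nf
    have him : 2 * (a * b) = r * w.im := by
      rw [hab]
      have : r^2 * (r^2 - w.re^2)/4 = (r * w.im / 2)^2 := by nlinarith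
      rw [this, Real.sqrt_sq (by positivity)]
      ring
    have habs : ‖z‖ = r := by
      rw [← Real.sqrt_sq hr0.le, Complex.norm_def, Complex.normSq_apply]
      congr 1
      simp only [hz]
      nlinarith
    have hzne : z ≠ 0 := by
      intro hc
      rw [hc] at habs
      simp at habs
      exact hr0.ne' habs.symm
    have hzsq : z ^ 2 = (r : ℂ) * w := by
      rw [pow_two, Complex.ext_iff]
      constructor
      · simp [Complex.mul_re, hz]
        nlinarith
      · simp [Complex.mul_im, hz]
        nlinarith
    refine ⟨z, ⟨by rw [habs]; exact h1, Real.sqrt_nonneg _, Real.sqrt_nonneg _⟩, ?_⟩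
    rw [Phi_ne z hzne, habs, hzsq]
    have : (r : ℂ) ≠ 0 := by exact_mod_cast hr0.ne'
    field_simp

lemma lip_key (z w : ℂ) (hle : ‖z‖ ≤ ‖w‖) :
    ‖Phi z - Phi w‖ ≤ 3 * ‖z - w‖ := by
  rcases eq_or_ne w 0 with hw | hw
  · have hz : z = 0 := by
      rw [hw] at hle; simp at hle
      exact hle
    simp [hz, hw, Phi_zero]
  rcases eq_or_ne z 0 with hz | hz
  · rw [hz, Phi_zero, zero_sub, norm_neg, abs_Phi, zero_sub, norm_neg]
    linarith [norm_nonneg w]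
  · set az := ‖z‖ with haz'
    set aw := ‖w‖ with haw'
    have haz : 0 < az := norm_pos_iff.mpr hz
    have haw : 0 < aw := norm_pos_iff.mpr hw
    have hazc : (az : ℂ) ≠ 0 := by exact_mod_cast haz.ne'
    have hawc : (aw : ℂ) ≠ 0 := by exact_mod_cast haw.ne'
    have hid : Phi z - Phi w =
        (z ^ 2 - w ^ 2) / (aw : ℂ) + z ^ 2 * ((aw - az : ℝ) : ℂ) / ((az : ℂ) * (aw : ℂ)) := by
      rw [Phi_ne z hz, Phi_ne w hw, ← haz', ← haw']
      push_cast
      field_simp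
      ring
    have t1 : ‖(z ^ 2 - w ^ 2) / (aw : ℂ)‖ =
        ‖z - w‖ * ‖z + w‖ / aw := by
      rw [show z ^ 2 - w ^ 2 = (z - w) * (z + w) by ring, norm_div, norm_mul,
        Complex.norm_real, Real.norm_eq_abs, abs_of_pos haw]
    have t2 : ‖z ^ 2 * ((aw - az : ℝ) : ℂ) / ((az : ℂ) * (aw : ℂ))‖ =
        az * (aw - az) / aw := by
      rw [norm_div, norm_mul, norm_pow, norm_mul, Complex.norm_real, Complex.norm_real,
        Complex.norm_real, Real.norm_eq_abs, Real.norm_eq_abs, Real.norm_eq_abs, _root_.abs_of_nonneg (sub_nonneg.mpr hle), _root_.abs_of_pos haz, _root_.abs_of_pos haw]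
      field_simp
      ring
    have tri : ‖Phi z - Phi w‖ ≤
        ‖z - w‖ * ‖z + w‖ / aw + az * (aw - az) / aw := by
      rw [hid, ← t1, ← t2]
      exact norm_add_le _ _
    have hsum : ‖z + w‖ ≤ az + aw := norm_add_le z w
    have hdiff : aw - az ≤ ‖z - w‖ := by
      have h' := norm_sub_norm_le w z
      rw [norm_sub_rev z w]
      exact h'
    have hd0 : 0 ≤ ‖z - w‖ := norm_nonneg _
    rw [← add_div] at tri
    refine tri.trans ?_
    rw [div_le_iff₀ haw]
    nlinarith [mul_le_mul_of_nonneg_left hsum hd0,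
      mul_le_mul hle hdiff (by linarith) haw.le]

lemma inv_key (z w : ℂ) (hz : z ∈ quarterDisk) (hw : w ∈ quarterDisk) :
    ‖z - w‖ ≤ ‖Phi z - Phi w‖ := by
  rcases eq_or_ne z 0 with h0 | h0
  · rw [h0, Phi_zero, zero_sub, zero_sub, norm_neg, norm_neg, abs_Phi]
  rcases eq_or_ne w 0 with h0' | h0'
  · rw [h0', Phi_zero, sub_zero, sub_zero, abs_Phi]
  have key : (Phi z * (starRingEnd ℂ) (Phi w)).re ≤ (z * (starRingEnd ℂ) w).re := by
    set u := z * (starRingEnd ℂ) w with hu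
    have hure : 0 ≤ u.re := by
      rw [hu, Complex.mul_re]
      simp only [Complex.conj_re, Complex.conj_im]
      obtain ⟨_, h1, h2⟩ := hz
      obtain ⟨_, h3, h4⟩ := hw
      nlinarith
    have habsu : ‖u‖ = ‖z‖ * ‖w‖ := by
      rw [hu, norm_mul, Complex.norm_conj]
    have haz : 0 < ‖z‖ := norm_pos_iff.mpr h0
    have haw : 0 < ‖w‖ := norm_pos_iff.mpr h0'
    have heq : Phi z * (starRingEnd ℂ) (Phi w) =
        u ^ 2 / ((‖z‖ * ‖w‖ : ℝ) : ℂ) := by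
      rw [Phi_ne z h0, Phi_ne w h0', hu]
      rw [map_div₀, map_pow, Complex.conj_ofReal]
      push_cast
      rw [mul_pow]
      field_simp
    rw [heq]
    push_cast
    rw [show ((‖z‖ : ℂ) * (‖w‖ : ℂ)) = ((‖z‖ * ‖w‖ : ℝ) : ℂ) by push_cast; ring]
    rw [Complex.div_ofReal_re]
    have hu2re : (u ^ 2).re = u.re ^ 2 - u.im ^ 2 := by
      rw [pow_two, Complex.mul_re]; ring
    rw [hu2re]
    have hsq : ‖u‖ = Real.sqrt (u.re ^ 2 + u.im ^ 2) := by
      rw [Complex.norm_def, Complex.normSq_apply]; ring_nf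
    have hge : u.re ≤ ‖u‖ := by
      rw [hsq]
      calc u.re ≤ |u.re| := le_abs_self _
        _ = Real.sqrt (u.re ^ 2) := (Real.sqrt_sq_eq_abs _).symm
        _ ≤ _ := Real.sqrt_le_sqrt (by nlinarith)
    have habs0 : 0 < ‖u‖ := by rw [habsu]; positivity
    rw [div_le_iff₀ (by rw [← habsu]; exact habs0)]
    rw [← habsu]
    nlinarith [mul_le_mul_of_nonneg_left hge hure]
  have h1 : ‖z - w‖ ^ 2 ≤ ‖Phi z - Phi w‖ ^ 2 := by
    rw [Complex.sq_norm, Complex.sq_norm, Complex.normSq_sub, Complex.normSq_sub]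
    have e1 : Complex.normSq (Phi z) = Complex.normSq z := by
      rw [← Complex.sq_norm, ← Complex.sq_norm, abs_Phi]
    have e2 : Complex.normSq (Phi w) = Complex.normSq w := by
      rw [← Complex.sq_norm, ← Complex.sq_norm, abs_Phi]
    rw [e1, e2]
    linarith
  nlinarith [norm_nonneg (z - w), norm_nonneg (Phi z - Phi w)]

lemma part4 (h : ℝ) (h0 : 0 < h) (h1 : h ≤ 1) (A : ℂ →ᵃ[ℝ] ℂ)
    (hA0 : A 0 = Phi 0) (hAh : A (h : ℂ) = Phi (h : ℂ))
    (hAI : A (h * Complex.I) = Phi (h * Complex.I)) :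
    (A '' (convexHull ℝ {(0 : ℂ), (h : ℂ), (h * Complex.I)}) ⊆
        segment ℝ (-(h : ℂ)) (h : ℂ)) ∧
      ¬ Set.InjOn A (convexHull ℝ {(0 : ℂ), (h : ℂ), (h * Complex.I)}) := by
  rw [Phi_zero] at hA0
  rw [Phi_real h h0.le] at hAh
  rw [Phi_I h h0] at hAI
  constructor
  · rw [AffineMap.image_convexHull]
    apply convexHull_min _ (convex_segment _ _)
    rintro x ⟨y, hy, rfl⟩
    simp only [mem_insert_iff, mem_singleton_iff] at hy
    rcases hy with rfl | rfl | rfl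
    · rw [hA0]
      exact ⟨1/2, 1/2, by norm_num, by norm_num, by norm_num, by module⟩
    · rw [hAh]
      exact right_mem_segment ℝ _ _
    · rw [hAI]
      exact left_mem_segment ℝ _ _
  · intro hinj
    set m : ℂ := midpoint ℝ (h : ℂ) ((h : ℂ) * Complex.I) with hm
    have hT : Convex ℝ (convexHull ℝ {(0 : ℂ), (h : ℂ), (h * Complex.I)}) := convex_convexHull ℝ _
    have h0mem : (0 : ℂ) ∈ convexHull ℝ {(0 : ℂ), (h : ℂ), (h * Complex.I)} :=
      subset_convexHull ℝ _ (by simp)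
    have hhmem : (h : ℂ) ∈ convexHull ℝ {(0 : ℂ), (h : ℂ), (h * Complex.I)} :=
      subset_convexHull ℝ _ (by simp)
    have hImem : (h : ℂ) * Complex.I ∈ convexHull ℝ {(0 : ℂ), (h : ℂ), (h * Complex.I)} :=
      subset_convexHull ℝ _ (by simp)
    have hmmem : m ∈ convexHull ℝ {(0 : ℂ), (h : ℂ), (h * Complex.I)} :=
      hT.segment_subset hhmem hImem (midpoint_mem_segment _ _)
    have hAm : A m = 0 := by
      rw [hm, AffineMap.map_midpoint, hAh, hAI]
      simp [midpoint_self_neg]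
    have : (0 : ℂ) = m := hinj h0mem hmmem (by rw [hAm, hA0])
    have : m.im = 0 := by rw [← this]; simp
    rw [hm, midpoint_eq_smul_add] at this
    simp [Complex.add_im, Complex.smul_re] at this
    exact h0.ne' this

/-- `Φ` is a bijective Lipschitz map from the quarter disk onto the
half disk with Lipschitz inverse, but for every `0 < h ≤ 1` the affine
interpolant of `Φ` on the triangle `T = conv{0, h, h i}` maps `T` into the
segment `[-h, h] × {0}` and is not injective on `T`. -/
theorem stmt_1 :
    (Set.BijOn Phi quarterDisk halfDisk) ∧
    (∃ K : NNReal, LipschitzOnWith K Phi quarterDisk) ∧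
    (∃ K' : ℝ, ∀ z ∈ quarterDisk, ∀ w ∈ quarterDisk,
      dist z w ≤ K' * dist (Phi z) (Phi w)) ∧
    (∀ h : ℝ, 0 < h → h ≤ 1 →
      ∀ A : ℂ →ᵃ[ℝ] ℂ,
        A 0 = Phi 0 → A (h : ℂ) = Phi (h : ℂ) →
        A (h * Complex.I) = Phi (h * Complex.I) →
        (A '' (convexHull ℝ {(0 : ℂ), (h : ℂ), (h * Complex.I)}) ⊆
            segment ℝ (-(h : ℂ)) (h : ℂ)) ∧
          ¬ Set.InjOn A (convexHull ℝ {(0 : ℂ), (h : ℂ), (h * Complex.I)})) := by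
  refine ⟨⟨maps_to, inj_on, surj_on⟩, ⟨3, ?_⟩, ⟨1, ?_⟩,
    fun h h0 h1 A hA0 hAh hAI => part4 h h0 h1 A hA0 hAh hAI⟩
  · rw [lipschitzOnWith_iff_dist_le_mul]
    intro x _ y _
    rw [Complex.dist_eq, Complex.dist_eq]
    have h3 : ((3 : NNReal) : ℝ) = 3 := by norm_num
    rw [h3]
    rcases le_total (‖x‖) (‖y‖) with hle | hle
    · exact lip_key x y hle
    · rw [norm_sub_rev, norm_sub_rev x y]
      exact lip_key y x hle
  · intro z hz w hw
    rw [Complex.dist_eq, Complex.dist_eq, one_mul]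
    exact inv_key z w hz hw
end

section
/- In the setting of the merit-function derivative: suppose phi'(0) = L + M ( sum_{i : C_i = 0} max(D_i, 0) + sum_{i : C_i > 0} D_i ) with real numbers L, C_i, D_i satisfying: (a) for every i, C_i + t0 D_i <= 0 for some fixed t0 > 0 (feasibility of the linearized constraint), and (b) L + sum_i lambda_i t0 D_i = -e for some e > 0 and nonnegative lambda_i with lambda_i (C_i + t0 D_i) = 0, and (c) M >= t0 * max_i lambda_i. Then phi'(0) < 0. -/
open Finset

/-- Lemma 5.1 reduced to real arithmetic: the merit function has a
negative right derivative provided the penalty parameter `M` is large enough. -/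
theorem stmt_9 (N : ℕ) (L e t0 M : ℝ) (C D lam : Fin N → ℝ)
    (ht0 : 0 < t0) (he : 0 < e) (hM : 0 < M)
    -- (a) feasibility of the linearized constraints
    (hfeas : ∀ i, C i + t0 * D i ≤ 0)
    -- (b) stationarity identity and multiplier conditions
    (hstat : L + (∑ i, lam i * (t0 * D i)) = -e)
    (hlam : ∀ i, 0 ≤ lam i)
    (hcompl : ∀ i, lam i * (C i + t0 * D i) = 0)
    -- (c) M dominates the multipliers
    (hMbig : ∀ i, t0 * lam i ≤ M) :
    L + M * ((∑ i ∈ Finset.univ.filter (fun i => C i = 0), max (D i) 0)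
      + ∑ i ∈ Finset.univ.filter (fun i => 0 < C i), D i) < 0 := by
  have h1 : (∑ i ∈ Finset.univ.filter (fun i => C i = 0), max (D i) 0) = 0 := by
    apply Finset.sum_eq_zero
    intro i hi
    have hc : C i = 0 := (Finset.mem_filter.mp hi).2
    have := hfeas i
    have hD : D i ≤ 0 := by nlinarith
    exact max_eq_right hD
  have h2 : M * (∑ i ∈ Finset.univ.filter (fun i => 0 < C i), D i)
      ≤ ∑ i ∈ Finset.univ.filter (fun i => 0 < C i), lam i * (t0 * D i) := by
    rw [Finset.mul_sum]
    apply Finset.sum_le_sum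
    intro i hi
    have hc : 0 < C i := (Finset.mem_filter.mp hi).2
    have hf := hfeas i
    have hD : D i ≤ 0 := by nlinarith
    have := mul_le_mul_of_nonpos_right (hMbig i) hD
    nlinarith
  have h3 : (∑ i ∈ Finset.univ.filter (fun i => 0 < C i), lam i * (t0 * D i))
      ≤ ∑ i, lam i * (t0 * D i) := by
    apply Finset.sum_le_sum_of_subset_of_nonneg (Finset.filter_subset _ _)
    intro i _ hi
    have hc : ¬ 0 < C i := by simpa using (fun h => hi (Finset.mem_filter.mpr ⟨Finset.mem_univ i, h⟩))
    have hc' : C i ≤ 0 := le_of_not_gt hc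
    rcases mul_eq_zero.mp (hcompl i) with h | h
    · simp [h]
    · have : t0 * D i = -C i := by linarith
      rw [this]
      exact mul_nonneg (hlam i) (by linarith)
  rw [h1, zero_add]
  nlinarith [h2, h3]
end
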